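/- Let S ⊆ ℝⁿ be a finite set and let L, U : ℝⁿ → ℝⁿ be affine maps such that L(z) ≤ U(z) componentwise for every z in the convex hull of S. Then ⋃_{z ∈ conv(S)} [L(z), U(z)] ⊆ conv( ⋃_{v ∈ S} [L(v), U(v)] ), i.e., the union over all points z of the convex hull of S of the boxes with corners L(z) and U(z) is contained in the convex hull of the union over v ∈ S of the boxes with corners L(v) and U(v). -/

import Mathlib

lemma affine_sum_smul {n : ℕ} (S : Finset (Fin n → ℝ)) (f : (Fin n → ℝ) →ᵃ[ℝ] (Fin n → ℝ))
    (w : (Fin n → ℝ) → ℝ) (hw1 : ∑ v ∈ S, w v = 1) :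
    ∑ v ∈ S, w v • f v = f (∑ v ∈ S, w v • v) := by
  have hd : ∀ x, f x = f.linear x + f 0 := fun x => by
    conv_lhs => rw [AffineMap.decomp f]
    rfl
  have hlin : f.linear (∑ v ∈ S, w v • v) = ∑ v ∈ S, w v • f.linear v := by
    rw [map_sum]; exact Finset.sum_congr rfl fun v _ => f.linear.map_smul _ _
  rw [hd (∑ v ∈ S, w v • v), hlin]
  calc ∑ v ∈ S, w v • f v = ∑ v ∈ S, (w v • f.linear v + w v • f 0) :=
        Finset.sum_congr rfl fun v _ => by rw [hd v, smul_add]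
    _ = ∑ v ∈ S, w v • f.linear v + (∑ v ∈ S, w v) • f 0 := by
        rw [Finset.sum_add_distrib, Finset.sum_smul]
    _ = _ := by rw [hw1, one_smul]

/-- for a finite set `S` and affine maps `L, U` with `L z ≤ U z` on the
convex hull of `S`, the union over `z ∈ conv S` of the boxes `Icc (L z) (U z)` is
contained in the convex hull of the union over `v ∈ S` of the boxes `Icc (L v) (U v)`. -/
theorem iUnion_boxes_convexHull_subset
    {n : ℕ} (S : Finset (Fin n → ℝ))
    (L U : (Fin n → ℝ) →ᵃ[ℝ] (Fin n → ℝ))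
    (hLU : ∀ z ∈ convexHull ℝ (S : Set (Fin n → ℝ)), L z ≤ U z) :
    (⋃ z ∈ convexHull ℝ (S : Set (Fin n → ℝ)), Set.Icc (L z) (U z)) ⊆
      convexHull ℝ (⋃ v ∈ (S : Set (Fin n → ℝ)), Set.Icc (L v) (U v)) := by
  intro x hx
  simp only [Set.mem_iUnion, exists_prop] at hx
  obtain ⟨z, hz, hxz⟩ := hx
  have hzc := hz
  rw [Finset.convexHull_eq] at hz
  obtain ⟨w, hw0, hw1, hwz⟩ := hz
  have hwz' : ∑ v ∈ S, w v • v = z := by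
    rw [← hwz, Finset.centerMass_eq_of_sum_1 _ _ hw1]; rfl
  set θ : Fin n → ℝ := fun l => if U z l - L z l = 0 then 0 else (x l - L z l)/(U z l - L z l)
    with hθdef
  have hLz : L z ≤ U z := hLU z hzc
  have hθ0 : ∀ l, 0 ≤ θ l := by
    intro l; simp only [hθdef]
    split
    · exact le_refl 0
    · exact div_nonneg (by linarith [hxz.1 l]) (by linarith [hLz l])
  have hθ1 : ∀ l, θ l ≤ 1 := by
    intro l; simp only [hθdef]
    split
    · exact zero_le_one
    · rename_i h
      rw [div_le_one (by rcases lt_or_eq_of_le (sub_nonneg.2 (hLz l)) with h'|h' <;> [exact h'; exact absurd h'.symm h])]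
      linarith [hxz.2 l]
  have hxθ : ∀ l, x l = L z l + θ l * (U z l - L z l) := by
    intro l; simp only [hθdef]
    split
    · rename_i h; have h1 := hxz.1 l; have h2 := hxz.2 l
      simp only [Pi.le_def] at h1 h2  -- maybe not needed
      ring_nf; linarith [hxz.1 l, hxz.2 l]
    · rename_i h; field_simp; ring
  set p : (Fin n → ℝ) → (Fin n → ℝ) := fun v l => L v l + θ l * (U v l - L v l) with hpdef
  have hp : ∀ v ∈ S, p v ∈ ⋃ y ∈ (S : Set (Fin n → ℝ)), Set.Icc (L y) (U y) := by
    intro v hv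
    have hLv : L v ≤ U v := hLU v (subset_convexHull ℝ _ hv)
    refine Set.mem_iUnion₂.2 ⟨v, hv, ?_, ?_⟩ <;> intro l
    · show L v l ≤ L v l + θ l * (U v l - L v l)
      have := hLv l; nlinarith [hθ0 l, hθ1 l]
    · show L v l + θ l * (U v l - L v l) ≤ U v l
      have := hLv l; nlinarith [hθ0 l, hθ1 l]
  have hLsum : ∑ v ∈ S, w v • L v = L z := by rw [affine_sum_smul S L w hw1, hwz']
  have hUsum : ∑ v ∈ S, w v • U v = U z := by rw [affine_sum_smul S U w hw1, hwz']
  have key : ∑ v ∈ S, w v • p v = x := by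
    funext l
    have hL : ∑ v ∈ S, w v * L v l = L z l := by
      rw [← hLsum]; simp [Finset.sum_apply]
    have hU : ∑ v ∈ S, w v * U v l = U z l := by
      rw [← hUsum]; simp [Finset.sum_apply]
    have : (∑ v ∈ S, w v • p v) l = ∑ v ∈ S, w v * (L v l + θ l * (U v l - L v l)) := by
      simp [Finset.sum_apply, hpdef]
    rw [this, hxθ l]
    have expand : ∀ v, w v * (L v l + θ l * (U v l - L v l))
        = w v * L v l + θ l * (w v * U v l) - θ l * (w v * L v l) := fun v => by ring
    simp only [expand]
    rw [Finset.sum_sub_distrib, Finset.sum_add_distrib, ← Finset.mul_sum, ← Finset.mul_sum,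
      hL, hU]
    ring
  rw [← key]
  have hws : (0:ℝ) < ∑ v ∈ S, w v := by rw [hw1]; norm_num
  have := Finset.centerMass_mem_convexHull S hw0 hws hp
  rwa [Finset.centerMass_eq_of_sum_1 _ _ hw1] at this
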